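/- For any activation class A of a bidirected graph G and vertices u, w, the refinement of A by the relation c ~_{uw} d iff c(h_u) = d(h_u) = w splits A into two complementary principal order ideals of the boolean lattice A: the principal lower order ideal generated by the unique maximal element M(u;u;A) satisfying c(h_u)=u, and (when nonempty) the principal upper order ideal generated by the unique minimal element m(u;w;A) satisfying c(h_u)=w with w≠u. The upper ideal is empty if and only if c(h_u)=u for all c in A. -/

import Mathlib

open scoped Classical

/-- An oriented hypergraph on vertex set `V`: edges `E`, incidences `I`,
incidence function given by `vtx` and `edge`, and incidence orientations `sgn`. -/
structure OrientedHypergraph (V : Type) [Fintype V] [DecidableEq V] where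
  E : Type
  I : Type
  [fintypeE : Fintype E]
  [fintypeI : Fintype I]
  [decEqI : DecidableEq I]
  vtx : I → V
  edge : I → E
  sgn : I → ℤ

attribute [instance] OrientedHypergraph.fintypeE OrientedHypergraph.fintypeI
  OrientedHypergraph.decEqI

variable {V : Type} [Fintype V] [DecidableEq V]

/-- A bidirected graph: an oriented hypergraph in which every edge has exactly two
incidences, recorded by the fixed-point-free involution `τ` pairing the two
incidences of each edge. -/
structure Bidirected (V : Type) [Fintype V] [DecidableEq V]
    extends OrientedHypergraph V where
  τ : I → I
  τ_invol : ∀ i, τ (τ i) = i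
  τ_ne : ∀ i, τ i ≠ i
  τ_edge : ∀ i, edge (τ i) = edge i
  edge_two : ∀ i j, edge i = edge j → j = i ∨ j = τ i

/-- A pre-contributor: an incidence-preserving map of `|V|` disjoint directed paths
of length one into `G`, sending the tail `t_v` to `v`.  The component at `v` is the
weak walk with tail incidence `i1 v` and head incidence `i2 v`. -/
structure PreContributor (G : OrientedHypergraph V) where
  i1 : V → G.I
  i2 : V → G.I
  tail_eq : ∀ v, G.vtx (i1 v) = v
  edge_eq : ∀ v, G.edge (i1 v) = G.edge (i2 v)

namespace PreContributor

variable {G : OrientedHypergraph V}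

/-- The head vertex of the component of `p` at `v`: `p(h_v)`. -/
def head (p : PreContributor G) (v : V) : V := G.vtx (p.i2 v)

/-- A contributor: a pre-contributor whose heads cover `V`, `{p(h_v) | v ∈ V} = V`. -/
def IsContributor (p : PreContributor G) : Prop := Function.Surjective p.head

/-- The component of `p` at `v` is a backstep `(v,i,e,i,v)`. -/
def BackstepAt (p : PreContributor G) (v : V) : Prop := p.i2 v = p.i1 v

/-- The sign of the length-one weak walk of `p` at `v`. -/
def walkSign (p : PreContributor G) (v : V) : ℤ := -(G.sgn (p.i1 v) * G.sgn (p.i2 v))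

/-- Two vertices lie in the same component of the image of `p`. -/
def compRel (p : PreContributor G) : V → V → Prop :=
  Relation.EqvGen (fun v w => p.head v = w)

/-- The setoid of components of `p`. -/
def compSetoid (p : PreContributor G) : Setoid V := Relation.EqvGen.setoid (fun v w => p.head v = w)

/-- A component class is a (lone) backstep. -/
def IsBackstepClass (p : PreContributor G) (q : Quotient p.compSetoid) : Prop :=
  ∃ v, Quotient.mk p.compSetoid v = q ∧ p.head v = v ∧ p.BackstepAt v

/-- The number of vertices in a component class. -/
noncomputable def compCard (p : PreContributor G) (q : Quotient p.compSetoid) : ℕ :=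
  Nat.card {v : V // Quotient.mk p.compSetoid v = q}

/-- The sign of a component class: the product of the signs of its weak walks. -/
noncomputable def compSign (p : PreContributor G) (q : Quotient p.compSetoid) : ℤ :=
  ∏ᶠ v ∈ {v : V | Quotient.mk p.compSetoid v = q}, p.walkSign v

/-- `tc`: total number of circles of a contributor (backsteps do not count). -/
noncomputable def tc (p : PreContributor G) : ℕ :=
  Nat.card {q : Quotient p.compSetoid // ¬ p.IsBackstepClass q}

/-- `pc`: number of positive circles of a contributor. -/
noncomputable def pc (p : PreContributor G) : ℕ :=
  Nat.card {q : Quotient p.compSetoid // ¬ p.IsBackstepClass q ∧ p.compSign q = 1}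

/-- `nc`: number of negative circles of a contributor. -/
noncomputable def nc (p : PreContributor G) : ℕ :=
  Nat.card {q : Quotient p.compSetoid // ¬ p.IsBackstepClass q ∧ p.compSign q = -1}

/-- `oc`: number of odd circles of a contributor. -/
noncomputable def oc (p : PreContributor G) : ℕ :=
  Nat.card {q : Quotient p.compSetoid // ¬ p.IsBackstepClass q ∧ Odd (p.compCard q)}

/-- `ec`: number of even circles of a contributor. -/
noncomputable def ec (p : PreContributor G) : ℕ :=
  Nat.card {q : Quotient p.compSetoid // ¬ p.IsBackstepClass q ∧ Even (p.compCard q)}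

end PreContributor

/-- The `V × E` incidence matrix of an oriented hypergraph. -/
noncomputable def OrientedHypergraph.inc (G : OrientedHypergraph V) : Matrix V G.E ℤ :=
  fun v e => ∑ᶠ i ∈ {i : G.I | G.vtx i = v ∧ G.edge i = e}, G.sgn i

/-- The oriented hypergraphic Laplacian `L_G = H_G H_Gᵀ`. -/
noncomputable def OrientedHypergraph.lap (G : OrientedHypergraph V) : Matrix V V ℤ :=
  G.inc * G.inc.transpose

namespace Bidirected

variable {G : Bidirected V}

/-- Packing the directed adjacency of `p` at `v` into a backstep. -/
def pack (G : Bidirected V) (p : PreContributor G.toOrientedHypergraph) (v : V) :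
    PreContributor G.toOrientedHypergraph where
  i1 := p.i1
  i2 := fun u => if u = v then p.i1 v else p.i2 u
  tail_eq := p.tail_eq
  edge_eq := fun u => by by_cases h : u = v <;> simp [h, p.edge_eq u]

/-- Unpacking the backstep of `p` at `v` into the unique directed adjacency out of
`v` completing the edge. -/
def unpack (G : Bidirected V) (p : PreContributor G.toOrientedHypergraph) (v : V) :
    PreContributor G.toOrientedHypergraph where
  i1 := p.i1
  i2 := fun u => if u = v then G.τ (p.i1 v) else p.i2 u
  tail_eq := p.tail_eq
  edge_eq := fun u => by
    by_cases h : u = v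
    · simp [h, G.τ_edge]
    · simp [h, p.edge_eq u]

end Bidirected
namespace Bidirected

variable {V : Type} [Fintype V] [DecidableEq V]

/-- A sequence of vertices is a valid sequence of unpackings from `p`:
each step unpacks a backstep. -/
def UnpackSeqOK (G : Bidirected V) :
    PreContributor G.toOrientedHypergraph → List V → Prop
  | _, [] => True
  | p, v :: l => p.BackstepAt v ∧ UnpackSeqOK G (G.unpack p v) l

/-- A sequence of vertices is a valid sequence of packings from `p`:
each step packs a directed adjacency. -/
def PackSeqOK (G : Bidirected V) :
    PreContributor G.toOrientedHypergraph → List V → Prop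
  | _, [] => True
  | p, v :: l => ¬ p.BackstepAt v ∧ PackSeqOK G (G.pack p v) l

/-- `d` is obtained from `c` by activating a circle: a minimal sequence of
unpackings producing a new contributor, which has one more circle. -/
def Activates (G : Bidirected V) (c d : PreContributor G.toOrientedHypergraph) : Prop :=
  c.IsContributor ∧ d.IsContributor ∧
    ∃ l : List V, G.UnpackSeqOK c l ∧ List.foldl G.unpack c l = d ∧
      d.tc = c.tc + 1 ∧
      ∀ l' : List V, l' <+: l → l' ≠ [] → l' ≠ l →
        ¬ (List.foldl G.unpack c l').IsContributor

/-- `d` is obtained from `c` by deactivating a circle: a minimal sequence of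
packings producing a new contributor, which has one fewer circle. -/
def Deactivates (G : Bidirected V) (c d : PreContributor G.toOrientedHypergraph) : Prop :=
  c.IsContributor ∧ d.IsContributor ∧
    ∃ l : List V, G.PackSeqOK c l ∧ List.foldl G.pack c l = d ∧
      c.tc = d.tc + 1 ∧
      ∀ l' : List V, l' <+: l → l' ≠ [] → l' ≠ l →
        ¬ (List.foldl G.pack c l').IsContributor

/-- The activation partial order `≤_a`. -/
def leA (G : Bidirected V) : PreContributor G.toOrientedHypergraph →
    PreContributor G.toOrientedHypergraph → Prop :=
  Relation.ReflTransGen G.Activates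

/-- Activation equivalence `~_a`; its classes are the activation classes. -/
def ActEq (G : Bidirected V) (c d : PreContributor G.toOrientedHypergraph) : Prop :=
  G.leA c d ∨ G.leA d c

/-- Two vertices are linked by an edge of `G`. -/
def linkR (G : Bidirected V) (v w : V) : Prop :=
  ∃ i : G.I, G.vtx i = v ∧ G.vtx (G.τ i) = w

/-- Every connected component of `G` contains at least one adjacency
(an edge whose two incidences lie at two distinct vertices). -/
def EveryComponentHasAdjacency (G : Bidirected V) : Prop :=
  ∀ v : V, ∃ w : V, Relation.EqvGen G.linkR v w ∧
    ∃ i : G.I, G.vtx i = w ∧ G.vtx (G.τ i) ≠ w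

end Bidirected
namespace ActAux

open PreContributor Set Function

variable {V : Type} [Fintype V] [DecidableEq V] (G : Bidirected V)

lemma pc_ext {p q : PreContributor G.toOrientedHypergraph}
    (h1 : p.i1 = q.i1) (h2 : p.i2 = q.i2) : p = q := by
  cases p; cases q; simp_all

/-- the set of "unpacked" vertices of a pre-contributor -/
def Sv (p : PreContributor G.toOrientedHypergraph) : Set V := {v | p.i2 v ≠ p.i1 v}

variable (c : PreContributor G.toOrientedHypergraph)

/-- the step map -/
def sig : V → V := fun v => G.vtx (G.τ (c.i1 v))

noncomputable def ofSet (s : Set V) : PreContributor G.toOrientedHypergraph where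
  i1 := c.i1
  i2 := fun v => if v ∈ s then G.τ (c.i1 v) else c.i1 v
  tail_eq := c.tail_eq
  edge_eq := by
    intro v; by_cases h : v ∈ s <;> simp [h, G.τ_edge]

variable {G c}

lemma i2_cases (p : PreContributor G.toOrientedHypergraph) (v : V) :
    p.i2 v = p.i1 v ∨ p.i2 v = G.τ (p.i1 v) :=
  G.edge_two _ _ (p.edge_eq v)

lemma eq_ofSet (p : PreContributor G.toOrientedHypergraph) (h : p.i1 = c.i1) :
    p = ofSet G c (Sv G p) := by
  refine pc_ext G h ?_
  funext v
  by_cases hv : v ∈ Sv G p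
  · rcases i2_cases p v with h2 | h2
    · exact absurd h2 hv
    · simp only [ofSet, if_pos hv, h2, h]
  · have hv' : p.i2 v = p.i1 v := not_not.mp hv
    simp only [ofSet, if_neg hv, hv', h]

lemma Sv_ofSet (s : Set V) : Sv G (ofSet G c s) = s := by
  ext v
  by_cases h : v ∈ s <;> simp [Sv, ofSet, h, G.τ_ne]

lemma head_ofSet (s : Set V) (v : V) :
    (ofSet G c s).head v = if v ∈ s then sig G c v else v := by
  by_cases h : v ∈ s <;> simp [PreContributor.head, ofSet, sig, h, c.tail_eq v]

lemma backstep_ofSet (s : Set V) (v : V) :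
    (ofSet G c s).BackstepAt v ↔ v ∉ s := by
  by_cases h : v ∈ s <;> simp [PreContributor.BackstepAt, ofSet, h, G.τ_ne]

lemma unpack_ofSet (s : Set V) (v : V) :
    G.unpack (ofSet G c s) v = ofSet G c (insert v s) := by
  refine pc_ext G rfl ?_
  funext u
  by_cases h : u = v
  · subst h; simp [Bidirected.unpack, ofSet]
  · simp [Bidirected.unpack, ofSet, h]

/-- invariance of a set under the step map -/
def Inv (s : Set V) : Prop :=
  Set.MapsTo (sig G c) s s ∧ Set.SurjOn (sig G c) s s

variable (G c) in
lemma inv_of_sub {s : Set V} (h : s ⊆ sig G c '' s) : Inv (G := G) (c := c) s := by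
  have himg : sig G c '' s = s :=
    (Set.eq_of_subset_of_ncard_le h (Set.ncard_image_le s.toFinite)
      (s.toFinite.image _)).symm
  exact ⟨Set.mapsTo_iff_image_subset.mpr himg.le, h⟩

lemma ctb_iff_inv (s : Set V) :
    (ofSet G c s).IsContributor ↔ Inv (G := G) (c := c) s := by
  constructor
  · intro h
    refine inv_of_sub G c ?_
    intro v hv
    obtain ⟨w, hw⟩ := h v
    rw [head_ofSet] at hw
    by_cases hws : w ∈ s
    · rw [if_pos hws] at hw; exact ⟨w, hws, hw⟩
    · rw [if_neg hws] at hw; exact absurd (hw ▸ hv) hws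
  · rintro ⟨_, hsurj⟩ v
    by_cases hv : v ∈ s
    · obtain ⟨w, hw, hww⟩ := hsurj hv
      exact ⟨w, by rw [head_ofSet, if_pos hw]; exact hww⟩
    · exact ⟨v, by rw [head_ofSet, if_neg hv]⟩

lemma inv_injOn {s : Set V} (h : Inv (G := G) (c := c) s) :
    Set.InjOn (sig G c) s :=
  (((s.toFinite.surjOn_iff_bijOn_of_mapsTo h.1).mp h.2)).injOn

lemma inv_union {s t : Set V} (hs : Inv (G := G) (c := c) s)
    (ht : Inv (G := G) (c := c) t) : Inv (G := G) (c := c) (s ∪ t) :=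
  ⟨fun v hv => hv.elim (fun h => Or.inl (hs.1 h)) (fun h => Or.inr (ht.1 h)),
   fun v hv => hv.elim (fun h => (hs.2 h).imp fun _ h => ⟨Or.inl h.1, h.2⟩)
     (fun h => (ht.2 h).imp fun _ h => ⟨Or.inr h.1, h.2⟩)⟩

end ActAux
namespace ActAux

open PreContributor Set Function

variable {V : Type} [Fintype V] [DecidableEq V] {G : Bidirected V}
variable {c : PreContributor G.toOrientedHypergraph}

/-- periodicity under the step map -/
def Per (v : V) : Prop := ∃ p, 0 < p ∧ (sig G c)^[p] v = v

lemma iter_mul_per {v : V} {p : ℕ} (h : (sig G c)^[p] v = v) :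
    ∀ m, (sig G c)^[p * m] v = v := by
  intro m
  induction m with
  | zero => simp
  | succ m ih =>
    rw [Nat.mul_succ, Function.iterate_add_apply, h, ih]

lemma per_inj {a b : V} (ha : Per (G := G) (c := c) a) (hb : Per (G := G) (c := c) b)
    (h : sig G c a = sig G c b) : a = b := by
  obtain ⟨p, hp, hpa⟩ := ha
  obtain ⟨q, hq, hqb⟩ := hb
  have h1 : (sig G c)^[p * q] a = a := iter_mul_per hpa q
  have h2 : (sig G c)^[p * q] b = b := by
    rw [mul_comm]; exact iter_mul_per hqb p
  have hpos : 1 ≤ p * q := Nat.one_le_iff_ne_zero.mpr (Nat.mul_ne_zero hp.ne' hq.ne')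
  have e : p * q = (p * q - 1) + 1 := (Nat.succ_pred_eq_of_pos hpos).symm
  rw [e, Function.iterate_succ_apply, h] at h1
  rw [e, Function.iterate_succ_apply] at h2
  exact h1.symm.trans h2

lemma inv_per {s : Set V} (hs : Inv (G := G) (c := c) s) {v : V} (hv : v ∈ s) :
    Per (G := G) (c := c) v := by
  have hmaps : ∀ n, Set.MapsTo ((sig G c)^[n]) s s := fun n => hs.1.iterate n
  have hinj : ∀ n, Set.InjOn ((sig G c)^[n]) s := by
    intro n
    induction n with
    | zero => simp [Set.injOn_id]
    | succ n ih =>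
      intro a ha b hb hab
      rw [Function.iterate_succ_apply', Function.iterate_succ_apply'] at hab
      exact ih ha hb (inv_injOn hs (hmaps n ha) (hmaps n hb) hab)
  obtain ⟨a, b, hab, h⟩ := Finite.exists_ne_map_eq_of_infinite
    (fun n : ℕ => (sig G c)^[n] v)
  rcases Nat.lt_or_ge a b with hlt | hge
  · refine ⟨b - a, Nat.sub_pos_of_lt hlt, ?_⟩
    have : (sig G c)^[a] ((sig G c)^[b - a] v) = (sig G c)^[a] v := by
      rw [← Function.iterate_add_apply, Nat.add_sub_cancel' hlt.le]
      exact h.symm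
    exact hinj a (hmaps _ hv) hv this
  · have hlt : b < a := lt_of_le_of_ne hge (fun e => hab e.symm)
    refine ⟨a - b, Nat.sub_pos_of_lt hlt, ?_⟩
    have : (sig G c)^[b] ((sig G c)^[a - b] v) = (sig G c)^[b] v := by
      rw [← Function.iterate_add_apply, Nat.add_sub_cancel' hlt.le]
      exact h
    exact hinj b (hmaps _ hv) hv this

variable (G c) in
/-- the forward orbit -/
def orb (v : V) : Set V := {w | ∃ n, (sig G c)^[n] v = w}

lemma mem_orb_self (v : V) : v ∈ orb G c v := ⟨0, rfl⟩

lemma orb_trans {v w : V} (h : w ∈ orb G c v) : orb G c w ⊆ orb G c v := by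
  rintro x ⟨m, rfl⟩
  obtain ⟨n, rfl⟩ := h
  exact ⟨m + n, (Function.iterate_add_apply _ m n v)⟩

lemma mem_orb_symm {v w : V} (hp : Per (G := G) (c := c) v) (hw : w ∈ orb G c v) :
    v ∈ orb G c w := by
  obtain ⟨n, rfl⟩ := hw
  obtain ⟨p, hp0, hpv⟩ := hp
  refine ⟨p * n - n, ?_⟩
  rw [← Function.iterate_add_apply, Nat.sub_add_cancel (Nat.le_mul_of_pos_left n hp0)]
  exact iter_mul_per hpv n

lemma orb_eq {v w : V} (hp : Per (G := G) (c := c) v) (hw : w ∈ orb G c v) :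
    orb G c w = orb G c v :=
  le_antisymm (orb_trans hw) (orb_trans (mem_orb_symm hp hw))

lemma per_of_mem_orb {v w : V} (hp : Per (G := G) (c := c) v) (hw : w ∈ orb G c v) :
    Per (G := G) (c := c) w := by
  obtain ⟨k, hk⟩ := mem_orb_symm hp hw
  obtain ⟨n, hn⟩ := hw
  obtain ⟨p, hp0, hpv⟩ := hp
  refine ⟨n + (p + k), by omega, ?_⟩
  rw [Function.iterate_add_apply, Function.iterate_add_apply, hk, hpv, hn]

lemma orb_sub {s : Set V} (hs : Inv (G := G) (c := c) s) {v : V} (hv : v ∈ s) :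
    orb G c v ⊆ s := by
  rintro w ⟨n, rfl⟩
  exact hs.1.iterate n hv

lemma orb_inv {v : V} (hp : Per (G := G) (c := c) v) :
    Inv (G := G) (c := c) (orb G c v) := by
  constructor
  · rintro w ⟨n, rfl⟩
    exact ⟨n + 1, Function.iterate_succ_apply' _ n v⟩
  · rintro w hw
    have hpw := per_of_mem_orb hp hw
    obtain ⟨q, hq0, hqw⟩ := hpw
    refine ⟨(sig G c)^[q - 1] w, ?_, ?_⟩
    · exact orb_trans hw ⟨q - 1, rfl⟩
    · have h' := Function.iterate_succ_apply' (sig G c) (q - 1) w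
      rw [show (q-1).succ = q by omega] at h'
      rw [← h']; exact hqw

variable (G c) in
/-- the set of periodic points -/
def PerS : Set V := {v | Per (G := G) (c := c) v}

lemma perS_inv : Inv (G := G) (c := c) (PerS G c) := by
  constructor
  · rintro v ⟨p, hp0, hpv⟩
    refine ⟨p, hp0, ?_⟩
    rw [← Function.iterate_succ_apply, Function.iterate_succ_apply', hpv]
  · rintro v hv
    obtain ⟨p, hp0, hpv⟩ := hv
    refine ⟨(sig G c)^[p - 1] v, ?_, ?_⟩
    · exact per_of_mem_orb ⟨p, hp0, hpv⟩ ⟨p - 1, rfl⟩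
    · have h' := Function.iterate_succ_apply' (sig G c) (p - 1) v
      rw [show (p-1).succ = p by omega] at h'
      rw [← h']; exact hpv

lemma inv_sub_perS {s : Set V} (hs : Inv (G := G) (c := c) s) : s ⊆ PerS G c :=
  fun _ hv => inv_per hs hv

lemma inv_diff {s t : Set V} (hs : Inv (G := G) (c := c) s)
    (ht : Inv (G := G) (c := c) t) : Inv (G := G) (c := c) (s \ t) := by
  constructor
  · rintro v ⟨hvs, hvt⟩
    refine ⟨hs.1 hvs, fun hmem => hvt ?_⟩
    obtain ⟨w, hwt, hww⟩ := ht.2 hmem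
    rwa [← per_inj (inv_per ht hwt) (inv_per hs hvs) hww]
  · rintro v ⟨hvs, hvt⟩
    obtain ⟨w, hws, hww⟩ := hs.2 hvs
    refine ⟨w, ⟨hws, fun hwt => hvt ?_⟩, hww⟩
    rw [← hww]; exact ht.1 hwt

/-- a nonempty invariant subset of an orbit is the whole orbit -/
lemma inv_sub_orb_eq {v : V} (hp : Per (G := G) (c := c) v) {t : Set V}
    (ht : Inv (G := G) (c := c) t) (hsub : t ⊆ orb G c v) (hne : t.Nonempty) :
    t = orb G c v := by
  obtain ⟨x, hx⟩ := hne
  have h1 : orb G c x ⊆ t := orb_sub ht hx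
  have h2 : orb G c x = orb G c v := orb_eq hp (hsub hx)
  exact le_antisymm hsub (h2 ▸ h1)

end ActAux
namespace ActAux

open PreContributor Set Function

variable {V : Type} [Fintype V] [DecidableEq V] {G : Bidirected V}
variable {c : PreContributor G.toOrientedHypergraph}

section Classes

variable {s : Set V} (hInv : Inv (G := G) (c := c) s)

include hInv in
lemma head_iter_in {v : V} (hv : v ∈ s) (n : ℕ) :
    (ofSet G c s).head^[n] v = (sig G c)^[n] v := by
  induction n with
  | zero => rfl
  | succ n ih =>
    rw [Function.iterate_succ_apply', Function.iterate_succ_apply', ih,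
      head_ofSet, if_pos (hInv.1.iterate n hv)]

lemma head_iter_out {v : V} (hv : v ∉ s) (n : ℕ) :
    (ofSet G c s).head^[n] v = v :=
  Function.iterate_fixed (by rw [head_ofSet, if_neg hv]) n

lemma egen_iter (a : V) (n : ℕ) :
    Relation.EqvGen (fun v w => (ofSet G c s).head v = w) a ((ofSet G c s).head^[n] a) := by
  induction n with
  | zero => exact Relation.EqvGen.refl a
  | succ n ih =>
    exact Relation.EqvGen.trans _ _ _ ih
      (Relation.EqvGen.rel _ _ (Function.iterate_succ_apply' _ n a).symm)

lemma eqv_iff (a b : V) :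
    Relation.EqvGen (fun v w => (ofSet G c s).head v = w) a b ↔
      ∃ m n, (ofSet G c s).head^[m] a = (ofSet G c s).head^[n] b := by
  constructor
  · intro h
    induction h with
    | rel x y hxy => exact ⟨1, 0, by simpa using hxy⟩
    | refl x => exact ⟨0, 0, rfl⟩
    | symm x y _ ih => obtain ⟨m, n, h⟩ := ih; exact ⟨n, m, h.symm⟩
    | trans x y z _ _ ih1 ih2 =>
      obtain ⟨m, n, h1⟩ := ih1
      obtain ⟨m', n', h2⟩ := ih2
      refine ⟨m' + m, n + n', ?_⟩
      calc (ofSet G c s).head^[m' + m] x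
          = (ofSet G c s).head^[m'] ((ofSet G c s).head^[m] x) :=
            Function.iterate_add_apply _ _ _ _
        _ = (ofSet G c s).head^[m'] ((ofSet G c s).head^[n] y) := by rw [h1]
        _ = (ofSet G c s).head^[n] ((ofSet G c s).head^[m'] y) := by
            rw [← Function.iterate_add_apply, ← Function.iterate_add_apply, Nat.add_comm]
        _ = (ofSet G c s).head^[n] ((ofSet G c s).head^[n'] z) := by rw [h2]
        _ = (ofSet G c s).head^[n + n'] z := (Function.iterate_add_apply _ _ _ _).symm
  · rintro ⟨m, n, h⟩
    refine Relation.EqvGen.trans _ _ _ (egen_iter a m) ?_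
    rw [h]
    exact Relation.EqvGen.symm _ _ (egen_iter b n)

include hInv in
lemma eqv_out {v : V} (hv : v ∉ s) (w : V) :
    Relation.EqvGen (fun a b => (ofSet G c s).head a = b) w v ↔ w = v := by
  constructor
  · intro h
    obtain ⟨m, n, h⟩ := (eqv_iff w v).mp h
    rw [head_iter_out hv] at h
    by_cases hw : w ∈ s
    · rw [head_iter_in hInv hw] at h
      exact absurd (h ▸ hInv.1.iterate m hw) hv
    · rwa [head_iter_out hw] at h
  · rintro rfl; exact Relation.EqvGen.refl w

include hInv in
lemma eqv_in {v : V} (hv : v ∈ s) (w : V) :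
    Relation.EqvGen (fun a b => (ofSet G c s).head a = b) w v ↔ w ∈ orb G c v := by
  constructor
  · intro h
    obtain ⟨m, n, h⟩ := (eqv_iff w v).mp h
    rw [head_iter_in hInv hv] at h
    by_cases hw : w ∈ s
    · rw [head_iter_in hInv hw] at h
      have hx1 : (sig G c)^[m] w ∈ orb G c w := ⟨m, rfl⟩
      have hx2 : (sig G c)^[m] w ∈ orb G c v := h ▸ ⟨n, rfl⟩
      have e1 := orb_eq (inv_per hInv hw) hx1
      have e2 := orb_eq (inv_per hInv hv) hx2
      have e3 : orb G c w = orb G c v := e1.symm.trans e2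
      rw [← e3]
      exact mem_orb_self w
    · rw [head_iter_out hw] at h
      exact absurd (h ▸ hInv.1.iterate n hv) hw
  · rintro ⟨n, rfl⟩
    rw [← head_iter_in hInv hv]
    exact Relation.EqvGen.symm _ _ (egen_iter v n)

include hInv in
lemma mk_eq_iff (a b : V) :
    (Quotient.mk (ofSet G c s).compSetoid a = Quotient.mk (ofSet G c s).compSetoid b) ↔
      Relation.EqvGen (fun v w => (ofSet G c s).head v = w) a b :=
  ⟨Quotient.exact, fun h => Quotient.sound (s := (ofSet G c s).compSetoid) h⟩

include hInv in
lemma bs_iff (v : V) :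
    (ofSet G c s).IsBackstepClass (Quotient.mk (ofSet G c s).compSetoid v) ↔ v ∉ s := by
  constructor
  · rintro ⟨w, hw, _, hbs⟩ hv
    have hws : w ∉ s := (backstep_ofSet s w).mp hbs
    have : w ∈ orb G c v := (eqv_in hInv hv w).mp ((mk_eq_iff hInv w v).mp hw)
    exact hws (orb_sub hInv hv this)
  · intro hv
    exact ⟨v, rfl, by rw [head_ofSet, if_neg hv], (backstep_ofSet s v).mpr hv⟩

variable (G c s) in
def orbSet : Set (Set V) := {A : Set V | ∃ v ∈ s, A = orb G c v}

include hInv in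
lemma tc_of_inv : (ofSet G c s).tc = (orbSet G c s).ncard := by
  have key : ∀ q : Quotient (ofSet G c s).compSetoid, ¬ (ofSet G c s).IsBackstepClass q →
      {w : V | Quotient.mk (ofSet G c s).compSetoid w = q} ∈ orbSet G c s := by
    intro q hq
    obtain ⟨v, hv⟩ := q.exists_rep
    have hvs : v ∈ s := by
      by_contra hvs
      exact hq (hv ▸ (bs_iff hInv v).mpr hvs)
    refine ⟨v, hvs, ?_⟩
    ext w
    rw [Set.mem_setOf_eq, ← hv, mk_eq_iff hInv, eqv_in hInv hvs]
  have hbij : Function.Bijective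
      (fun q : {q : Quotient (ofSet G c s).compSetoid // ¬ (ofSet G c s).IsBackstepClass q} =>
        (⟨{w : V | Quotient.mk (ofSet G c s).compSetoid w = q.1}, key q.1 q.2⟩ :
          orbSet G c s)) := by
    constructor
    · rintro q1 q2 h
      simp only [Subtype.mk.injEq] at h
      obtain ⟨v, hv⟩ := q1.1.exists_rep
      have hv1 : v ∈ {w : V | Quotient.mk (ofSet G c s).compSetoid w = q1.1} := hv
      rw [h] at hv1
      exact Subtype.ext (hv ▸ hv1)
    · rintro ⟨A, v, hvs, rfl⟩
      refine ⟨⟨Quotient.mk _ v, by rw [bs_iff hInv]; simpa using hvs⟩, ?_⟩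
      simp only [Subtype.mk.injEq]
      ext w
      rw [Set.mem_setOf_eq, mk_eq_iff hInv, eqv_in hInv hvs]
  rw [PreContributor.tc, Nat.card_eq_of_bijective _ hbij, Nat.card_coe_set_eq]

end Classes

lemma tc_succ {s : Set V} (hInv : Inv (G := G) (c := c) s) {v0 : V}
    (hp : Per (G := G) (c := c) v0) (hv0 : v0 ∉ s)
    (hdisj : orb G c v0 ∩ s = ∅) :
    (ofSet G c (s ∪ orb G c v0)).tc = (ofSet G c s).tc + 1 := by
  have hInvO : Inv (G := G) (c := c) (orb G c v0) := orb_inv hp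
  have hInvU : Inv (G := G) (c := c) (s ∪ orb G c v0) := inv_union hInv hInvO
  rw [tc_of_inv hInvU, tc_of_inv hInv]
  have hset : orbSet G c (s ∪ orb G c v0) = insert (orb G c v0) (orbSet G c s) := by
    ext A
    constructor
    · rintro ⟨v, hv, rfl⟩
      rcases hv with hv | hv
      · exact Or.inr ⟨v, hv, rfl⟩
      · exact Or.inl (orb_eq hp hv)
    · rintro (rfl | ⟨v, hv, rfl⟩)
      · exact ⟨v0, Or.inr (mem_orb_self v0), rfl⟩
      · exact ⟨v, Or.inl hv, rfl⟩
  have hnotmem : orb G c v0 ∉ orbSet G c s := by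
    rintro ⟨v, hv, hA⟩
    have : v0 ∈ s := by
      have : v0 ∈ orb G c v := hA ▸ mem_orb_self v0
      exact orb_sub hInv hv this
    exact hv0 this
  rw [hset, Set.ncard_insert_of_notMem hnotmem (Set.toFinite _)]

end ActAux
namespace ActAux

open PreContributor Set Function

variable {V : Type} [Fintype V] [DecidableEq V] {G : Bidirected V}
variable {c : PreContributor G.toOrientedHypergraph}

lemma foldl_unpack_i1 (l : List V) (p : PreContributor G.toOrientedHypergraph) :
    (List.foldl G.unpack p l).i1 = p.i1 := by
  induction l generalizing p with
  | nil => rfl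
  | cons v l ih => exact (ih (G.unpack p v))

lemma Sv_unpack (p : PreContributor G.toOrientedHypergraph) (v : V) :
    Sv G (G.unpack p v) = insert v (Sv G p) := by
  ext u
  by_cases h : u = v
  · subst h; simp [Sv, Bidirected.unpack, G.τ_ne]
  · simp [Sv, Bidirected.unpack, h]

lemma Sv_foldl (l : List V) (p : PreContributor G.toOrientedHypergraph) :
    Sv G p ⊆ Sv G (List.foldl G.unpack p l) := by
  induction l generalizing p with
  | nil => exact le_rfl
  | cons v l ih =>
    refine subset_trans ?_ (ih (G.unpack p v))
    rw [Sv_unpack]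
    exact Set.subset_insert v _

lemma activates_forward {p q : PreContributor G.toOrientedHypergraph}
    (h : G.Activates p q) : p.i1 = q.i1 ∧ Sv G p ⊆ Sv G q ∧ q.IsContributor := by
  obtain ⟨hcp, hcq, l, hOK, rfl, _, _⟩ := h
  exact ⟨(foldl_unpack_i1 l p).symm, Sv_foldl l p, hcq⟩

lemma leA_forward {p q : PreContributor G.toOrientedHypergraph}
    (h : G.leA p q) : q = p ∨ (p.i1 = q.i1 ∧ Sv G p ⊆ Sv G q ∧ q.IsContributor) := by
  induction h with
  | refl => exact Or.inl rfl
  | tail _ hbc ih =>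
    obtain ⟨e1, e2, e3⟩ := activates_forward hbc
    rcases ih with rfl | ⟨f1, f2, _⟩
    · exact Or.inr ⟨e1, e2, e3⟩
    · exact Or.inr ⟨f1.trans e1, f2.trans e2, e3⟩

lemma leA_source {p q : PreContributor G.toOrientedHypergraph}
    (h : G.leA p q) : p = q ∨ p.IsContributor := by
  rcases (Relation.ReflTransGen.cases_head h) with rfl | ⟨b, hab, _⟩
  · exact Or.inl rfl
  · exact Or.inr hab.1

lemma unpack_seq (s : Set V) (l : List V) (hnd : l.Nodup) (hdisj : ∀ x ∈ l, x ∉ s) :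
    G.UnpackSeqOK (ofSet G c s) l ∧
      List.foldl G.unpack (ofSet G c s) l = ofSet G c (s ∪ {x | x ∈ l}) := by
  induction l generalizing s with
  | nil =>
    refine ⟨trivial, ?_⟩
    simp only [List.foldl_nil]
    refine congrArg (ofSet G c) ?_
    ext x; simp
  | cons v l ih =>
    have hvl : v ∉ l := (List.nodup_cons.mp hnd).1
    have hnd' : l.Nodup := (List.nodup_cons.mp hnd).2
    have hdisj' : ∀ x ∈ l, x ∉ insert v s := by
      intro x hx
      simp only [Set.mem_insert_iff, not_or]
      exact ⟨fun e => hvl (e ▸ hx), hdisj x (List.mem_cons_of_mem v hx)⟩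
    obtain ⟨hOK, hfold⟩ := ih (insert v s) hnd' hdisj'
    constructor
    · exact ⟨(backstep_ofSet s v).mpr (hdisj v (List.mem_cons_self (a := v) (l := l))),
        by rw [unpack_ofSet]; exact hOK⟩
    · rw [List.foldl_cons, unpack_ofSet, hfold]
      refine congrArg (ofSet G c) ?_
      ext x
      simp only [Set.mem_union, Set.mem_insert_iff, Set.mem_setOf_eq, List.mem_cons]
      tauto

lemma activates_step {s : Set V} (hInv : Inv (G := G) (c := c) s) {v0 : V}
    (hp : Per (G := G) (c := c) v0) (hv0 : v0 ∉ s)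
    (hdisj : orb G c v0 ∩ s = ∅) :
    G.Activates (ofSet G c s) (ofSet G c (s ∪ orb G c v0)) := by
  have hInvO : Inv (G := G) (c := c) (orb G c v0) := orb_inv hp
  have hInvU : Inv (G := G) (c := c) (s ∪ orb G c v0) := inv_union hInv hInvO
  set l : List V := (orb G c v0).toFinite.toFinset.toList with hl
  have hmem : ∀ x, x ∈ l ↔ x ∈ orb G c v0 := by
    intro x; rw [hl, Finset.mem_toList, Set.Finite.mem_toFinset]
  have hnd : l.Nodup := Finset.nodup_toList _
  have hdisjl : ∀ x ∈ l, x ∉ s := by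
    intro x hx hxs
    have : x ∈ orb G c v0 ∩ s := ⟨(hmem x).mp hx, hxs⟩
    rw [hdisj] at this
    exact this
  obtain ⟨hOK, hfold⟩ := unpack_seq s l hnd hdisjl
  have hset : s ∪ {x | x ∈ l} = s ∪ orb G c v0 := by
    ext x; simp only [Set.mem_union, Set.mem_setOf_eq, hmem x]
  refine ⟨(ctb_iff_inv s).mpr hInv, (ctb_iff_inv _).mpr hInvU, l, hOK,
    by rw [hfold, hset], tc_succ hInv hp hv0 hdisj, ?_⟩
  intro l' hpre hne hneq
  have hnd' : l'.Nodup := hpre.sublist.nodup hnd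
  have hdisjl' : ∀ x ∈ l', x ∉ s := fun x hx => hdisjl x (hpre.subset hx)
  obtain ⟨hOK', hfold'⟩ := unpack_seq s l' hnd' hdisjl'
  rw [hfold']
  intro hC
  set T : Set V := {x | x ∈ l'} with hT
  have hTsubO : T ⊆ orb G c v0 := fun x hx => (hmem x).mp (hpre.subset hx)
  have hInvU' : Inv (G := G) (c := c) (s ∪ T) := (ctb_iff_inv _).mp hC
  have hTeq : T = (s ∪ T) \ s := by
    ext x
    simp only [Set.mem_diff, Set.mem_union]
    exact ⟨fun hx => ⟨Or.inr hx, hdisjl' x hx⟩, fun hx => hx.1.resolve_left hx.2⟩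
  have hInvT : Inv (G := G) (c := c) T := hTeq ▸ inv_diff hInvU' hInv
  have hTne : T.Nonempty := by
    cases l' with
    | nil => exact absurd rfl hne
    | cons a l'' => exact ⟨a, List.mem_cons_self (a := a) (l := l'')⟩
  have hTO : T = orb G c v0 := inv_sub_orb_eq hp hInvT hTsubO hTne
  obtain ⟨rest, hrest⟩ := hpre
  have hrne : rest ≠ [] := by
    intro h; apply hneq; rw [← hrest, h, List.append_nil]
  obtain ⟨y, rest', rfl⟩ := List.exists_cons_of_ne_nil hrne
  have hyl : y ∈ l := by rw [← hrest]; simp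
  have hynl' : y ∉ l' := by
    have := hrest ▸ hnd
    rw [List.nodup_append] at this
    exact fun hy => this.2.2 y hy y (List.mem_cons_self (a := y) (l := rest')) rfl
  exact hynl' (by rw [show (y ∈ l') ↔ y ∈ T from Iff.rfl, hTO]; exact (hmem y).mp hyl)

lemma leA_backward {s t : Set V} (hs : Inv (G := G) (c := c) s)
    (ht : Inv (G := G) (c := c) t) (hsub : s ⊆ t) :
    G.leA (ofSet G c s) (ofSet G c t) := by
  obtain ⟨n, hn⟩ : ∃ n, (t \ s).ncard ≤ n := ⟨_, le_rfl⟩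
  induction n generalizing s with
  | zero =>
    have hts : t ⊆ s := Set.diff_eq_empty.mp (Set.ncard_eq_zero (Set.toFinite _) |>.mp
      (Nat.le_zero.mp hn))
    rw [Set.Subset.antisymm hsub hts]
    exact Relation.ReflTransGen.refl
  | succ n ih =>
    by_cases h : t ⊆ s
    · rw [Set.Subset.antisymm hsub h]
      exact Relation.ReflTransGen.refl
    · obtain ⟨v0, hvt, hvs⟩ := Set.not_subset.mp h
      have hp : Per (G := G) (c := c) v0 := inv_per ht hvt
      have hOsub : orb G c v0 ⊆ t := orb_sub ht hvt
      have hdisj : orb G c v0 ∩ s = ∅ := by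
        ext x
        simp only [Set.mem_inter_iff, Set.mem_empty_iff_false, iff_false, not_and]
        intro hxO hxs
        have h1 : orb G c x = orb G c v0 := orb_eq hp hxO
        have h2 : v0 ∈ orb G c x := h1 ▸ mem_orb_self v0
        exact hvs (orb_sub hs hxs h2)
      have hstep := activates_step hs hp hvs hdisj
      have hcard : (t \ (s ∪ orb G c v0)).ncard ≤ n := by
        have hlt : (t \ (s ∪ orb G c v0)).ncard < (t \ s).ncard := by
          refine Set.ncard_lt_ncard ⟨fun x hx => ⟨hx.1, fun hxs => hx.2 (Or.inl hxs)⟩, ?_⟩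
            (Set.toFinite _)
          intro hsub2
          exact (hsub2 ⟨hvt, hvs⟩).2 (Or.inr (mem_orb_self v0))
        omega
      exact Relation.ReflTransGen.head hstep
        (ih (inv_union hs (orb_inv hp)) (Set.union_subset hsub hOsub) hcard)

end ActAux
namespace ActAux

open PreContributor Set Function

variable {V : Type} [Fintype V] [DecidableEq V] {G : Bidirected V}
variable {c : PreContributor G.toOrientedHypergraph}

lemma inv_of_ctb {d : PreContributor G.toOrientedHypergraph} (h : d.IsContributor)
    (h1 : d.i1 = c.i1) : Inv (G := G) (c := c) (Sv G d) :=
  (ctb_iff_inv _).mp (by rw [← eq_ofSet d h1]; exact h)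

lemma mem_class (hc : c.IsContributor) {d : PreContributor G.toOrientedHypergraph}
    (h : G.ActEq c d) :
    d.i1 = c.i1 ∧ Inv (G := G) (c := c) (Sv G d) ∧
      (Sv G d ⊆ Sv G c ∨ Sv G c ⊆ Sv G d) := by
  have hScInv : Inv (G := G) (c := c) (Sv G c) := inv_of_ctb hc rfl
  rcases h with h | h
  · rcases leA_forward h with rfl | ⟨e1, e2, e3⟩
    · exact ⟨rfl, hScInv, Or.inl le_rfl⟩
    · exact ⟨e1.symm, inv_of_ctb e3 e1.symm, Or.inr e2⟩
  · rcases leA_forward h with rfl | ⟨e1, e2, _⟩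
    · exact ⟨rfl, hScInv, Or.inl le_rfl⟩
    · have hd : d.IsContributor := by
        rcases leA_source h with rfl | h' 
        · exact hc
        · exact h'
      exact ⟨e1, inv_of_ctb hd e1, Or.inl e2⟩

lemma mem_class' (hc : c.IsContributor) {t : Set V} (ht : Inv (G := G) (c := c) t)
    (hcomp : t ⊆ Sv G c ∨ Sv G c ⊆ t) : G.ActEq c (ofSet G c t) := by
  have hScInv : Inv (G := G) (c := c) (Sv G c) := inv_of_ctb hc rfl
  rcases hcomp with hcomp | hcomp
  · right
    have := leA_backward ht hScInv hcomp
    rwa [← eq_ofSet c rfl] at this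
  · left
    have := leA_backward hScInv ht hcomp
    rwa [← eq_ofSet c rfl] at this

lemma head_eq {d : PreContributor G.toOrientedHypergraph} (h1 : d.i1 = c.i1) (u : V) :
    d.head u = if u ∈ Sv G d then sig G c u else u := by
  have h := head_ofSet (c := c) (Sv G d) u
  rwa [← eq_ofSet d h1] at h

end ActAux
open ActAux

/-- For any activation class `A` (here the class of the contributor
`c`) of a bidirected graph `G` and a vertex `u`, the refinement of `A` by
`~_{uw}` splits `A` into two complementary principal order ideals: the principal
lower order ideal generated by the unique maximal element `M(u;u;A)` with head at
`u` mapping to `u`, and (when nonempty) the principal upper order ideal generated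
by the unique minimal element `m(u;w;A)` whose head at `u` maps to some fixed
`w ≠ u`; the upper ideal is empty iff every member of `A` sends `h_u` to `u`. -/
theorem activation_class_cut {V : Type} [Fintype V] [DecidableEq V]
    (G : Bidirected V) (hG : G.EveryComponentHasAdjacency)
    (c : PreContributor G.toOrientedHypergraph) (hc : c.IsContributor) (u : V) :
    (∃ M : PreContributor G.toOrientedHypergraph, G.ActEq c M ∧ M.head u = u ∧
      ∀ d, G.ActEq c d → (d.head u = u ↔ G.leA d M)) ∧
    ((∃ d, G.ActEq c d ∧ d.head u ≠ u) →
      ∃ w : V, w ≠ u ∧ ∃ m : PreContributor G.toOrientedHypergraph,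
        G.ActEq c m ∧ m.head u = w ∧
        ∀ d, G.ActEq c d → (d.head u ≠ u ↔ (d.head u = w ∧ G.leA m d))) := by
  have hScInv : Inv (G := G) (c := c) (Sv G c) := inv_of_ctb hc rfl
  constructor
  · -- Part 1: the maximal element M
    by_cases hcase : Per (G := G) (c := c) u ∧ sig G c u ≠ u
    · obtain ⟨hper, hne⟩ := hcase
      by_cases hu : u ∈ Sv G c
      · -- M = ofSet (Sv c \ orb u)
        have hInvM : Inv (G := G) (c := c) (Sv G c \ orb G c u) :=
          inv_diff hScInv (orb_inv hper)
        refine ⟨ofSet G c (Sv G c \ orb G c u),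
          mem_class' hc hInvM (Or.inl Set.diff_subset), ?_, ?_⟩
        · rw [head_ofSet, if_neg (fun h => h.2 (mem_orb_self u))]
        · intro d hd
          obtain ⟨h1, hInvd, hcomp⟩ := mem_class hc hd
          rw [head_eq h1]
          constructor
          · intro hh
            have hus : u ∉ Sv G d := by
              intro h; rw [if_pos h] at hh; exact hne hh
            have hsubc : Sv G d ⊆ Sv G c := hcomp.resolve_right (fun h => hus (h hu))
            have hsub : Sv G d ⊆ Sv G c \ orb G c u := by
              intro x hx
              refine ⟨hsubc hx, fun hxO => hus ?_⟩
              exact orb_sub hInvd hx (mem_orb_symm hper hxO)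
            have := leA_backward hInvd hInvM hsub
            rwa [← eq_ofSet d h1] at this
          · intro hle
            rcases leA_forward hle with heq | ⟨_, hsub, _⟩
            · rw [← heq, Sv_ofSet, if_neg (fun h => h.2 (mem_orb_self u))]
            · rw [Sv_ofSet] at hsub
              rw [if_neg (fun h => (hsub h).2 (mem_orb_self u))]
      · -- M = ofSet (PerS \ orb u)
        have hInvM : Inv (G := G) (c := c) (PerS G c \ orb G c u) :=
          inv_diff perS_inv (orb_inv hper)
        have hsubM : Sv G c ⊆ PerS G c \ orb G c u := by
          intro x hx
          refine ⟨inv_sub_perS hScInv hx, fun hxO => hu ?_⟩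
          exact orb_sub hScInv hx (mem_orb_symm hper hxO)
        refine ⟨ofSet G c (PerS G c \ orb G c u),
          mem_class' hc hInvM (Or.inr hsubM), ?_, ?_⟩
        · rw [head_ofSet, if_neg (fun h => h.2 (mem_orb_self u))]
        · intro d hd
          obtain ⟨h1, hInvd, hcomp⟩ := mem_class hc hd
          rw [head_eq h1]
          constructor
          · intro hh
            have hus : u ∉ Sv G d := by
              intro h; rw [if_pos h] at hh; exact hne hh
            have hsub : Sv G d ⊆ PerS G c \ orb G c u := by
              intro x hx
              refine ⟨inv_sub_perS hInvd hx, fun hxO => hus ?_⟩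
              exact orb_sub hInvd hx (mem_orb_symm hper hxO)
            have := leA_backward hInvd hInvM hsub
            rwa [← eq_ofSet d h1] at this
          · intro hle
            rcases leA_forward hle with heq | ⟨_, hsub, _⟩
            · rw [← heq, Sv_ofSet, if_neg (fun h => h.2 (mem_orb_self u))]
            · rw [Sv_ofSet] at hsub
              rw [if_neg (fun h => (hsub h).2 (mem_orb_self u))]
    · -- M = ofSet PerS : every element of the class fixes u
      push_neg at hcase
      refine ⟨ofSet G c (PerS G c),
        mem_class' hc perS_inv (Or.inr (inv_sub_perS hScInv)), ?_, ?_⟩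
      · rw [head_ofSet]
        by_cases h : u ∈ PerS G c
        · rw [if_pos h]; exact hcase h
        · rw [if_neg h]
      · intro d hd
        obtain ⟨h1, hInvd, _⟩ := mem_class hc hd
        constructor
        · intro _
          have := leA_backward hInvd perS_inv (inv_sub_perS hInvd)
          rwa [← eq_ofSet d h1] at this
        · intro _
          rw [head_eq h1]
          by_cases h : u ∈ Sv G d
          · rw [if_pos h]; exact hcase (inv_per hInvd h)
          · rw [if_neg h]
  · -- Part 2: the minimal element m
    rintro ⟨d0, hd0, hne0⟩
    obtain ⟨h10, hInv0, _⟩ := mem_class hc hd0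
    have hu0 : u ∈ Sv G d0 := by
      by_contra h
      rw [head_eq h10, if_neg h] at hne0
      exact hne0 rfl
    have hne : sig G c u ≠ u := by rwa [head_eq h10, if_pos hu0] at hne0
    have hper : Per (G := G) (c := c) u := inv_per hInv0 hu0
    refine ⟨sig G c u, hne, ?_⟩
    by_cases hu : u ∈ Sv G c
    · -- m = ofSet (orb u)
      refine ⟨ofSet G c (orb G c u),
        mem_class' hc (orb_inv hper) (Or.inl (orb_sub hScInv hu)),
        by rw [head_ofSet, if_pos (mem_orb_self u)], ?_⟩
      intro d hd
      obtain ⟨h1, hInvd, hcomp⟩ := mem_class hc hd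
      constructor
      · intro hh
        have hud : u ∈ Sv G d := by
          by_contra h
          rw [head_eq h1, if_neg h] at hh
          exact hh rfl
        refine ⟨by rw [head_eq h1, if_pos hud], ?_⟩
        have := leA_backward (orb_inv hper) hInvd (orb_sub hInvd hud)
        rwa [← eq_ofSet d h1] at this
      · rintro ⟨hh, _⟩
        rw [hh]; exact hne
    · -- m = ofSet (Sv c ∪ orb u)
      refine ⟨ofSet G c (Sv G c ∪ orb G c u),
        mem_class' hc (inv_union hScInv (orb_inv hper)) (Or.inr Set.subset_union_left),
        by rw [head_ofSet, if_pos (show u ∈ Sv G c ∪ orb G c u from Or.inr (mem_orb_self u))], ?_⟩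
      intro d hd
      obtain ⟨h1, hInvd, hcomp⟩ := mem_class hc hd
      constructor
      · intro hh
        have hud : u ∈ Sv G d := by
          by_contra h
          rw [head_eq h1, if_neg h] at hh
          exact hh rfl
        refine ⟨by rw [head_eq h1, if_pos hud], ?_⟩
        have hsubc : Sv G c ⊆ Sv G d := hcomp.resolve_left (fun h => hu (h hud))
        have := leA_backward (inv_union hScInv (orb_inv hper)) hInvd
          (Set.union_subset hsubc (orb_sub hInvd hud))
        rwa [← eq_ofSet d h1] at this
      · rintro ⟨hh, _⟩
        rw [hh]; exact hne
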